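/- arXiv:1409.4991 — 2 statements merged into one kernel-verified Lean document; each statement's English description precedes it below -/
import Mathlib

section
/- If an adversary crashes fewer than (γ/2)·2^D servers in a k-ary butterfly of dimension D (with n = k^D servers, k ≥ 2), then for every level ℓ with 1 ≤ ℓ ≤ D, the number of sub-butterflies at level ℓ (each containing k^ℓ servers) that contain at least 2^(ℓ-1) crashed servers is less than γ·2^(D-ℓ), and hence the fraction of such blocked sub-butterflies among all k^(D-ℓ) sub-butterflies at level ℓ is at most γ. -/
/-- If an adversary crashes fewer than `(γ/2)·2^D` servers in a `k`-ary butterfly of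
dimension `D` (servers partitioned at level `ℓ` into `k^(D-ℓ)` sub-butterflies of `k^ℓ`
servers each), then for every `1 ≤ ℓ ≤ D` the number of blocked sub-butterflies (those
with at least `2^(ℓ-1)` crashed servers) is less than `γ·2^(D-ℓ)`, hence the fraction of
blocked sub-butterflies is at most `γ`. -/
theorem stmt0 {k D ℓ : ℕ} (γ : ℝ) (hγ : 0 < γ) (hk : 2 ≤ k) (hℓ1 : 1 ≤ ℓ) (hℓD : ℓ ≤ D)
    (group : Fin (k ^ D) → Fin (k ^ (D - ℓ)))
    (hfiber : ∀ g, (Finset.univ.filter fun s => group s = g).card = k ^ ℓ)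
    (crashed : Finset (Fin (k ^ D)))
    (hcr : (crashed.card : ℝ) < γ / 2 * 2 ^ D)
    (blocked : Finset (Fin (k ^ (D - ℓ))))
    (hblocked : blocked =
      Finset.univ.filter fun g => 2 ^ (ℓ - 1) ≤ (crashed.filter fun s => group s = g).card) :
    (blocked.card : ℝ) < γ * 2 ^ (D - ℓ)
    ∧ (blocked.card : ℝ) / (k : ℝ) ^ (D - ℓ) ≤ γ := by
  have htotal : crashed.card = ∑ g : Fin (k ^ (D - ℓ)),
      (crashed.filter fun s => group s = g).card :=
    Finset.card_eq_sum_card_fiberwise (fun x _ => Finset.mem_univ _)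
  have hsum : blocked.card * 2 ^ (ℓ - 1) ≤ crashed.card := by
    rw [htotal]
    calc blocked.card * 2 ^ (ℓ - 1)
        = ∑ _g ∈ blocked, 2 ^ (ℓ - 1) := by rw [Finset.sum_const, smul_eq_mul]
      _ ≤ ∑ g ∈ blocked, (crashed.filter fun s => group s = g).card := by
          apply Finset.sum_le_sum
          intro g hg
          rw [hblocked] at hg
          exact (Finset.mem_filter.mp hg).2
      _ ≤ ∑ g : Fin (k ^ (D - ℓ)), (crashed.filter fun s => group s = g).card :=
          Finset.sum_le_sum_of_subset (Finset.subset_univ _)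
  have hsumR : (blocked.card : ℝ) * 2 ^ (ℓ - 1) ≤ crashed.card := by
    exact_mod_cast hsum
  have hpow : (2 : ℝ) ^ (ℓ - 1) * 2 ^ (D - ℓ) * 2 = 2 ^ D := by
    rw [← pow_add, ← pow_succ]
    congr 1
    omega
  have h1 : (blocked.card : ℝ) < γ * 2 ^ (D - ℓ) := by
    have h2 : (blocked.card : ℝ) * 2 ^ (ℓ - 1) < γ / 2 * 2 ^ D := lt_of_le_of_lt hsumR hcr
    rw [← hpow] at h2
    have hp : (0 : ℝ) < 2 ^ (ℓ - 1) := by positivity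
    nlinarith
  refine ⟨h1, ?_⟩
  have hkp : (0 : ℝ) < (k : ℝ) ^ (D - ℓ) := by positivity
  rw [div_le_iff₀ hkp]
  have h2k : (2 : ℝ) ^ (D - ℓ) ≤ (k : ℝ) ^ (D - ℓ) := by
    apply pow_le_pow_left₀ (by norm_num)
    exact_mod_cast hk
  nlinarith
end

section
/- Bottom-up aggregation in a k-ary butterfly of dimension D computes global sums correctly: if each of the n = k^D level-D nodes holds a pair (n₀, n₁) of natural numbers and in each of D rounds every node at level ℓ sums the pairs received from its k neighbors at level ℓ+1, then after D rounds every level-0 node holds the pair (∑ n₀, ∑ n₁) summed over all n initial nodes, and in each round each node sends and receives at most 2k messages. -/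
/-- Bottom-up aggregation in a `k`-ary butterfly of dimension `D` computes global sums
correctly: if each level-`D` node `x` holds a pair `f x` of naturals and every node at
level `ℓ < D` holds the sum of the pairs of its `k` neighbours at level `ℓ+1` (obtained
by replacing coordinate `ℓ`), then every level-0 node holds the total sum over all
`n = k^D` leaves; moreover each node sends and receives at most `2k` messages per
round (`k` sent plus `k` received). -/
theorem stmt17 (k D : ℕ) (hk : 2 ≤ k) [NeZero k]
    (f : (Fin D → Fin k) → ℕ × ℕ)
    (val : ℕ → (Fin D → Fin k) → ℕ × ℕ)
    (hleaf : ∀ x, val D x = f x)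
    (hstep : ∀ (ℓ : Fin D) (x : Fin D → Fin k),
      val ℓ x = ∑ b : Fin k, val ((ℓ : ℕ) + 1) (Function.update x ℓ b)) :
    (∀ x : Fin D → Fin k, val 0 x = ∑ y : Fin D → Fin k, f y) ∧ k + k ≤ 2 * k := by
  refine ⟨?_, by omega⟩
  have key : ∀ m, m ≤ D → ∀ x : Fin D → Fin k,
      val (D - m) x = ∑ y ∈ Finset.univ.filter
        (fun y : Fin D → Fin k => ∀ i : Fin D, (i : ℕ) < D - m → y i = x i), f y := by
    intro m
    induction m with
    | zero =>
      intro _ x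
      have hset : (Finset.univ.filter
          (fun y : Fin D → Fin k => ∀ i : Fin D, (i : ℕ) < D - 0 → y i = x i)) = {x} := by
        ext y
        simp only [Finset.mem_filter, Finset.mem_univ, true_and, Finset.mem_singleton]
        constructor
        · intro h; funext i; exact h i (by simpa using i.isLt)
        · rintro rfl; intro i _; rfl
      rw [hset, Finset.sum_singleton, Nat.sub_zero, hleaf]
    | succ m ih =>
      intro hm x
      set ℓ : ℕ := D - (m + 1) with hℓ
      have hℓD : ℓ < D := by omega
      have hstep' := hstep ⟨ℓ, hℓD⟩ x
      simp only [Fin.val_mk] at hstep'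
      have hℓ1 : ℓ + 1 = D - m := by omega
      rw [hstep']
      have := fun b : Fin k => ih (by omega) (Function.update x ⟨ℓ, hℓD⟩ b)
      rw [show (∑ b : Fin k, val (ℓ + 1) (Function.update x ⟨ℓ, hℓD⟩ b)) =
        ∑ b : Fin k, ∑ y ∈ Finset.univ.filter
          (fun y : Fin D → Fin k => ∀ i : Fin D, (i : ℕ) < D - m →
            y i = Function.update x ⟨ℓ, hℓD⟩ b i), f y from by
          refine Finset.sum_congr rfl fun b _ => ?_
          rw [hℓ1]; exact this b]
      rw [← Finset.sum_fiberwise (Finset.univ.filter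
        (fun y : Fin D → Fin k => ∀ i : Fin D, (i : ℕ) < ℓ → y i = x i))
        (fun y => y ⟨ℓ, hℓD⟩) f]
      refine Finset.sum_congr rfl fun b _ => ?_
      congr 1
      ext y
      simp only [Finset.mem_filter, Finset.mem_univ, true_and]
      constructor
      · intro h
        constructor
        · intro i hi
          have := h i (by omega)
          rwa [Function.update_of_ne (by simp [Fin.ext_iff]; omega)] at this
        · have := h ⟨ℓ, hℓD⟩ (by simp; omega)
          simpa using this
      · rintro ⟨h1, h2⟩ i hi
        rcases Nat.lt_or_ge (i : ℕ) ℓ with h | h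
        · rw [Function.update_of_ne (by simp [Fin.ext_iff]; omega), h1 i h]
        · have : (i : ℕ) = ℓ := by omega
          have : i = ⟨ℓ, hℓD⟩ := Fin.ext this
          subst this
          simp [h2]
  intro x
  have := key D le_rfl x
  simpa using this
end
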